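/- The Tetrahedron frame X = (1/√3)·((1,1,1), (1,−1,−1), (−1,1,−1), (−1,−1,1)) in ℝ³ is α-rectifying on the closed unit ball for α ≡ −1/√3: for every x with ‖x‖ ≤ 1, the set {x_i : ⟨x, x_i⟩ ≥ −1/√3} spans ℝ³. -/

import Mathlib

open RealInnerProductSpace

noncomputable def tetraM : Fin 4 → (Fin 3 → ℝ) :=
  ![![(1:ℝ), 1, 1], ![1, -1, -1], ![-1, 1, -1], ![-1, -1, 1]]

lemma tetra_mem_span_pair {S : Set (EuclideanSpace ℝ (Fin 3))}
    {w₁ w₂ e : EuclideanSpace ℝ (Fin 3)}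
    (h₁ : w₁ ∈ S) (h₂ : w₂ ∈ S) (r : ℝ) (h : r • (w₁ + w₂) = e) :
    e ∈ Submodule.span ℝ S := by
  rw [← h]
  exact Submodule.smul_mem _ _
    (Submodule.add_mem _ (Submodule.subset_span h₁) (Submodule.subset_span h₂))

noncomputable def tetraX (i : Fin 4) : EuclideanSpace ℝ (Fin 3) :=
  WithLp.toLp 2 ((Real.sqrt 3)⁻¹ • tetraM i)

lemma tetra_pair_sum (i j : Fin 4) (k : Fin 3) (s : ℝ)
    (hs : s = 1 ∨ s = -1)
    (h : ∀ l : Fin 3, tetraM i l + tetraM j l = if l = k then 2 * s else 0) :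
    (s * Real.sqrt 3 / 2) • (tetraX i + tetraX j)
      = EuclideanSpace.single (k : Fin 3) (1:ℝ) := by
  have h3 : Real.sqrt 3 ≠ 0 := by positivity
  ext l
  have hl := h l
  simp only [tetraX, PiLp.toLp_apply, EuclideanSpace.single_apply, PiLp.smul_apply, Pi.smul_apply,
    PiLp.add_apply, smul_eq_mul]
  rw [show (Real.sqrt 3)⁻¹ * tetraM i l + (Real.sqrt 3)⁻¹ * tetraM j l
      = (Real.sqrt 3)⁻¹ * (tetraM i l + tetraM j l) by ring, hl]
  by_cases hlk : l = k <;> simp [hlk] <;> rcases hs with rfl | rfl <;> field_simp <;> ring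

lemma tetraM_eq0 : tetraM 0 = ![(1:ℝ), 1, 1] := rfl
lemma tetraM_eq1 : tetraM 1 = ![(1:ℝ), -1, -1] := rfl
lemma tetraM_eq2 : tetraM 2 = ![(-1:ℝ), 1, -1] := rfl
lemma tetraM_eq3 : tetraM 3 = ![(-1:ℝ), -1, 1] := rfl

/-- The Tetrahedron frame in `ℝ³` is `α`-rectifying on the closed unit ball for
`α ≡ -1/√3`. -/
theorem stmt_7 :
    ∀ v : EuclideanSpace ℝ (Fin 3), ‖v‖ ≤ 1 →
      Submodule.span ℝ
        {w : EuclideanSpace ℝ (Fin 3) |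
          ∃ i : Fin 4,
            w = (WithLp.toLp 2 ((Real.sqrt 3)⁻¹ •
              (![![(1:ℝ), 1, 1], ![1, -1, -1], ![-1, 1, -1], ![-1, -1, 1]] i)) :
                EuclideanSpace ℝ (Fin 3)) ∧
            ⟪v, w⟫ ≥ -(Real.sqrt 3)⁻¹} = ⊤ := by
  intro v hv
  have h3 : (0:ℝ) < Real.sqrt 3 := by positivity
  set S : Set (EuclideanSpace ℝ (Fin 3)) :=
    {w : EuclideanSpace ℝ (Fin 3) |
      ∃ i : Fin 4,
        w = (WithLp.toLp 2 ((Real.sqrt 3)⁻¹ •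
          (![![(1:ℝ), 1, 1], ![1, -1, -1], ![-1, 1, -1], ![-1, -1, 1]] i)) :
            EuclideanSpace ℝ (Fin 3)) ∧
        ⟪v, w⟫ ≥ -(Real.sqrt 3)⁻¹} with hS
  -- membership criterion
  have hinner : ∀ i : Fin 4, ⟪v, tetraX i⟫ = (Real.sqrt 3)⁻¹ * ∑ l, v l * tetraM i l := by
    intro i
    rw [tetraX, WithLp.toLp_smul, real_inner_smul_right, PiLp.inner_apply]
    simp [mul_comm]
  have hmem : ∀ i : Fin 4, (∑ l, v l * tetraM i l) ≥ -1 → tetraX i ∈ S := by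
    intro i hi
    refine ⟨i, rfl, ?_⟩
    have : ⟪v, tetraX i⟫ = (Real.sqrt 3)⁻¹ * ∑ l, v l * tetraM i l := hinner i
    rw [this]
    have := inv_pos.mpr h3
    nlinarith
  set a := v 0 with ha; set b := v 1 with hb; set c := v 2 with hc
  have hsum : ∀ i : Fin 4, (∑ l, v l * tetraM i l) =
      ![a + b + c, a - b - c, -a + b - c, -a - b + c] i := by
    intro i
    fin_cases i <;> simp [tetraM, Fin.sum_univ_three, ← ha, ← hb, ← hc] <;> ring
  -- norm bound
  have hnorm : a ^ 2 + b ^ 2 + c ^ 2 ≤ 1 := by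
    have h1 : ⟪v, v⟫ = ‖v‖ ^ 2 := real_inner_self_eq_norm_sq v
    have h2 : ⟪v, v⟫ = a ^ 2 + b ^ 2 + c ^ 2 := by
      rw [PiLp.inner_apply]
      simp [Fin.sum_univ_three, ← ha, ← hb, ← hc]
    have hv0 : (0:ℝ) ≤ ‖v‖ := norm_nonneg v
    nlinarith
  -- span criterion via standard basis
  rw [eq_top_iff, ← (PiLp.basisFun 2 ℝ (Fin 3)).span_eq, Submodule.span_le]
  rintro _ ⟨j, rfl⟩
  have hbj : (PiLp.basisFun 2 ℝ (Fin 3)) j = EuclideanSpace.single j (1:ℝ) := by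
    simp [PiLp.basisFun_apply]
  rw [hbj]
  -- which vertices are in S
  have key : ∀ j : Fin 3, ∃ i₁ i₂ : Fin 4, ∃ s : ℝ, tetraX i₁ ∈ S ∧ tetraX i₂ ∈ S ∧
      (s * Real.sqrt 3 / 2) • (tetraX i₁ + tetraX i₂) = EuclideanSpace.single j (1:ℝ) := by
    intro j
    by_cases h1 : a + b + c ≥ -1
    · by_cases h4 : -a - b + c ≥ -1
      · -- vertices 0,1,2,3 minus possibly 1 or 2; pairs using 0 with 1,2,3? check 1,2
        by_cases h2 : a - b - c ≥ -1
        · -- 0,1 ∈ S. For e₀ use (0,1). For e₁, e₂ need another.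
          by_cases h3' : -a + b - c ≥ -1
          · -- all in S
            fin_cases j
            · exact ⟨0, 1, 1, hmem 0 (by rw [hsum]; simpa using h1),
                hmem 1 (by rw [hsum]; simpa using h2), by
                  apply tetra_pair_sum _ _ _ _ (Or.inl rfl)
                  intro l; simp only [tetraM_eq0, tetraM_eq1, tetraM_eq2, tetraM_eq3]; fin_cases l <;> norm_num [Fin.ext_iff]⟩
            · exact ⟨0, 2, 1, hmem 0 (by rw [hsum]; simpa using h1),
                hmem 2 (by rw [hsum]; simpa using h3'), by
                  apply tetra_pair_sum _ _ _ _ (Or.inl rfl)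
                  intro l; simp only [tetraM_eq0, tetraM_eq1, tetraM_eq2, tetraM_eq3]; fin_cases l <;> norm_num [Fin.ext_iff]⟩
            · exact ⟨0, 3, 1, hmem 0 (by rw [hsum]; simpa using h1),
                hmem 3 (by rw [hsum]; simpa using h4), by
                  apply tetra_pair_sum _ _ _ _ (Or.inl rfl)
                  intro l; simp only [tetraM_eq0, tetraM_eq1, tetraM_eq2, tetraM_eq3]; fin_cases l <;> norm_num [Fin.ext_iff]⟩
          · -- vertex 2 missing: use 0,1,3
            have m0 := hmem 0 (by rw [hsum]; simpa using h1)
            have m1 := hmem 1 (by rw [hsum]; simpa using h2)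
            have m3 := hmem 3 (by rw [hsum]; simpa using h4)
            fin_cases j
            · exact ⟨0, 1, 1, m0, m1, by
                apply tetra_pair_sum _ _ _ _ (Or.inl rfl)
                intro l; simp only [tetraM_eq0, tetraM_eq1, tetraM_eq2, tetraM_eq3]; fin_cases l <;> norm_num [Fin.ext_iff]⟩
            · exact ⟨1, 3, -1, m1, m3, by
                apply tetra_pair_sum _ _ _ _ (Or.inr rfl)
                intro l; simp only [tetraM_eq0, tetraM_eq1, tetraM_eq2, tetraM_eq3]; fin_cases l <;> norm_num [Fin.ext_iff]⟩
            · exact ⟨0, 3, 1, m0, m3, by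
                apply tetra_pair_sum _ _ _ _ (Or.inl rfl)
                intro l; simp only [tetraM_eq0, tetraM_eq1, tetraM_eq2, tetraM_eq3]; fin_cases l <;> norm_num [Fin.ext_iff]⟩
        · -- vertex 1 missing: 0,2,3 in S
          have h3' : -a + b - c ≥ -1 := by nlinarith
          have m0 := hmem 0 (by rw [hsum]; simpa using h1)
          have m2 := hmem 2 (by rw [hsum]; simpa using h3')
          have m3 := hmem 3 (by rw [hsum]; simpa using h4)
          fin_cases j
          · exact ⟨2, 3, -1, m2, m3, by
              apply tetra_pair_sum _ _ _ _ (Or.inr rfl)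
              intro l; simp only [tetraM_eq0, tetraM_eq1, tetraM_eq2, tetraM_eq3]; fin_cases l <;> norm_num [Fin.ext_iff]⟩
          · exact ⟨0, 2, 1, m0, m2, by
              apply tetra_pair_sum _ _ _ _ (Or.inl rfl)
              intro l; simp only [tetraM_eq0, tetraM_eq1, tetraM_eq2, tetraM_eq3]; fin_cases l <;> norm_num [Fin.ext_iff]⟩
          · exact ⟨0, 3, 1, m0, m3, by
              apply tetra_pair_sum _ _ _ _ (Or.inl rfl)
              intro l; simp only [tetraM_eq0, tetraM_eq1, tetraM_eq2, tetraM_eq3]; fin_cases l <;> norm_num [Fin.ext_iff]⟩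
      · -- vertex 3 missing: 0,1,2 in S
        have h2 : a - b - c ≥ -1 := by nlinarith
        have h3' : -a + b - c ≥ -1 := by nlinarith
        have m0 := hmem 0 (by rw [hsum]; simpa using h1)
        have m1 := hmem 1 (by rw [hsum]; simpa using h2)
        have m2 := hmem 2 (by rw [hsum]; simpa using h3')
        fin_cases j
        · exact ⟨0, 1, 1, m0, m1, by
            apply tetra_pair_sum _ _ _ _ (Or.inl rfl)
            intro l; simp only [tetraM_eq0, tetraM_eq1, tetraM_eq2, tetraM_eq3]; fin_cases l <;> norm_num [Fin.ext_iff]⟩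
        · exact ⟨0, 2, 1, m0, m2, by
            apply tetra_pair_sum _ _ _ _ (Or.inl rfl)
            intro l; simp only [tetraM_eq0, tetraM_eq1, tetraM_eq2, tetraM_eq3]; fin_cases l <;> norm_num [Fin.ext_iff]⟩
        · exact ⟨1, 2, -1, m1, m2, by
            apply tetra_pair_sum _ _ _ _ (Or.inr rfl)
            intro l; simp only [tetraM_eq0, tetraM_eq1, tetraM_eq2, tetraM_eq3]; fin_cases l <;> norm_num [Fin.ext_iff]⟩
    · -- vertex 0 missing: 1,2,3 in S
      have h2 : a - b - c ≥ -1 := by nlinarith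
      have h3' : -a + b - c ≥ -1 := by nlinarith
      have h4 : -a - b + c ≥ -1 := by nlinarith
      have m1 := hmem 1 (by rw [hsum]; simpa using h2)
      have m2 := hmem 2 (by rw [hsum]; simpa using h3')
      have m3 := hmem 3 (by rw [hsum]; simpa using h4)
      fin_cases j
      · exact ⟨2, 3, -1, m2, m3, by
          apply tetra_pair_sum _ _ _ _ (Or.inr rfl)
          intro l; simp only [tetraM_eq0, tetraM_eq1, tetraM_eq2, tetraM_eq3]; fin_cases l <;> norm_num [Fin.ext_iff]⟩
      · exact ⟨1, 3, -1, m1, m3, by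
          apply tetra_pair_sum _ _ _ _ (Or.inr rfl)
          intro l; simp only [tetraM_eq0, tetraM_eq1, tetraM_eq2, tetraM_eq3]; fin_cases l <;> norm_num [Fin.ext_iff]⟩
      · exact ⟨1, 2, -1, m1, m2, by
          apply tetra_pair_sum _ _ _ _ (Or.inr rfl)
          intro l; simp only [tetraM_eq0, tetraM_eq1, tetraM_eq2, tetraM_eq3]; fin_cases l <;> norm_num [Fin.ext_iff]⟩
  obtain ⟨i₁, i₂, s, hm1, hm2, heq⟩ := key j
  exact tetra_mem_span_pair hm1 hm2 _ heq
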